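/- arXiv:2108.09824 — 3 statements merged into one kernel-verified Lean document; each statement's English description precedes it below -/
import Mathlib

section
/- Let λ = √(1/2) and let ε > 0, and set p(n) = (λ + ε)·√(log n / n). Then asymptotically almost surely the random graph Γ ∈ G(n, p(n)) contains no induced k-cycle for any k > 3·√(n·log n). -/
open MeasureTheory Filter

/-- Bernoulli measure on `Bool` with success probability `p`. -/
noncomputable def bernoulliBool (p : ℝ) : Measure Bool :=
  ENNReal.ofReal p • Measure.dirac true + ENNReal.ofReal (1 - p) • Measure.dirac false

/-- The Erdős–Rényi measure: each potential edge of a graph on `Fin n`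
is present independently with probability `p`. -/
noncomputable def edgeMeasure (n : ℕ) (p : ℝ) : Measure (Sym2 (Fin n) → Bool) :=
  Measure.pi fun _ => bernoulliBool p

/-- The simple graph determined by an indicator of edges. -/
def graphOf {n : ℕ} (ω : Sym2 (Fin n) → Bool) : SimpleGraph (Fin n) :=
  SimpleGraph.fromEdgeSet {e | ω e = true}

/-- `S` is an induced `k`-cycle in `G`: `S` has `k` vertices and the induced
subgraph on `S` is a cycle of length `k`. -/
def IsInducedCycle {V : Type*} (G : SimpleGraph V) (k : ℕ) (S : Finset V) : Prop :=
  S.card = k ∧ Nonempty (G.induce (S : Set V) ≃g SimpleGraph.cycleGraph k)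

/-- The (full) subgraph of `G` induced on the vertex set `Λ` is Morse: whenever `C` is an
induced 4-cycle of `G` such that `C ∩ Λ` contains two non-adjacent vertices, `C ⊆ Λ`. -/
def IsMorse {V : Type*} (G : SimpleGraph V) (Λ : Set V) : Prop :=
  ∀ C : Finset V, IsInducedCycle G 4 C →
    (∃ v ∈ C, ∃ w ∈ C, v ∈ Λ ∧ w ∈ Λ ∧ v ≠ w ∧ ¬ G.Adj v w) → ↑C ⊆ Λ


instance (p : ℝ) : IsFiniteMeasure (bernoulliBool p) := by
  constructor; simp [bernoulliBool]

lemma bern_false (p : ℝ) : bernoulliBool p {false} = ENNReal.ofReal (1 - p) := by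
  simp [bernoulliBool]

lemma bern_univ (p : ℝ) (h0 : 0 ≤ p) (h1 : p ≤ 1) : bernoulliBool p Set.univ = 1 := by
  simp [bernoulliBool]
  rw [← ENNReal.ofReal_add h0 (by linarith), ← ENNReal.ofReal_one]
  congr 1; ring

lemma edgeMeasure_univ (n : ℕ) (p : ℝ) (h0 : 0 ≤ p) (h1 : p ≤ 1) :
    edgeMeasure n p Set.univ = 1 := by
  rw [edgeMeasure, Measure.pi_univ]
  simp only [bern_univ p h0 h1, Finset.prod_const, one_pow]

/-- the "bad event" for an embedding `f`: all non-edges of the cycle pattern are absent. -/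
def badEvent (n k : ℕ) (f : Fin k ↪ Fin n) : Set (Sym2 (Fin n) → Bool) :=
  {ω | ∀ d : Sym2 (Fin k), ¬ d.IsDiag → d ∉ (SimpleGraph.cycleGraph k).edgeSet →
    ω (d.map f) = false}

/-- the set of non-diagonal non-edges of the cycle graph -/
def nonEdges (k : ℕ) : Finset (Sym2 (Fin k)) :=
  Finset.univ.filter (fun d => ¬ d.IsDiag ∧ d ∉ (SimpleGraph.cycleGraph k).edgeSet)

lemma badEvent_eq_pi (n k : ℕ) (f : Fin k ↪ Fin n) :
    badEvent n k f = Set.pi Set.univ (fun e =>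
      {x : Bool | ∀ d : Sym2 (Fin k), ¬ d.IsDiag → d ∉ (SimpleGraph.cycleGraph k).edgeSet →
        d.map f = e → x = false}) := by
  ext ω
  simp only [badEvent, Set.mem_setOf_eq, Set.mem_pi, Set.mem_univ, forall_true_left]
  constructor
  · rintro h e d hd1 hd2 rfl; exact h d hd1 hd2
  · intro h d hd1 hd2; exact h (d.map f) d hd1 hd2 rfl

lemma measure_badEvent (n k : ℕ) (p : ℝ) (h0 : 0 ≤ p) (h1 : p ≤ 1) (f : Fin k ↪ Fin n) :
    edgeMeasure n p (badEvent n k f) = (ENNReal.ofReal (1 - p)) ^ (nonEdges k).card := by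
  rw [badEvent_eq_pi, edgeMeasure, Measure.pi_pi]
  set s := fun e : Sym2 (Fin n) =>
      {x : Bool | ∀ d : Sym2 (Fin k), ¬ d.IsDiag → d ∉ (SimpleGraph.cycleGraph k).edgeSet →
        d.map f = e → x = false} with hs
  have hmapinj : Function.Injective (Sym2.map f) := Sym2.map.injective f.injective
  have key : ∀ e : Sym2 (Fin n),
      bernoulliBool p (s e) =
        if e ∈ (nonEdges k).image (Sym2.map f) then ENNReal.ofReal (1 - p) else 1 := by
    intro e
    split_ifs with he
    · obtain ⟨d, hd, rfl⟩ := Finset.mem_image.mp he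
      rw [nonEdges, Finset.mem_filter] at hd
      have : s (Sym2.map f d) = {false} := by
        apply Set.eq_of_subset_of_subset
        · intro x hx; exact hx d hd.2.1 hd.2.2 rfl
        · rintro x rfl
          intro d' _ _ _; rfl
      rw [this, bern_false]
    · have : s e = Set.univ := by
        apply Set.eq_univ_of_forall
        intro x d hd1 hd2 hde
        exfalso; apply he
        exact Finset.mem_image.mpr ⟨d, by simp [nonEdges, hd1, hd2], hde⟩
      rw [this, bern_univ p h0 h1]
  rw [Finset.prod_congr rfl (fun e _ => key e)]
  rw [Finset.prod_ite_mem Finset.univ ((nonEdges k).image (Sym2.map f)) _]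
  simp only [Finset.univ_inter, Finset.prod_const]
  rw [Finset.card_image_of_injective _ hmapinj]

lemma cycle_edgeFinset_card (m : ℕ) :
    (SimpleGraph.cycleGraph (m + 3)).edgeFinset.card = m + 3 := by
  have h := SimpleGraph.sum_degrees_eq_twice_card_edges (SimpleGraph.cycleGraph (m + 3))
  have h2 : ∀ v : Fin (m + 3), (SimpleGraph.cycleGraph (m + 3)).degree v = 2 := fun v =>
    SimpleGraph.cycleGraph_degree_three_le
  rw [Finset.sum_congr rfl (fun v _ => h2 v), Finset.sum_const, Finset.card_univ,
    Fintype.card_fin, smul_eq_mul] at h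
  omega

lemma nonEdges_card (k : ℕ) (hk : 3 ≤ k) : (nonEdges k).card = k.choose 2 - k := by
  obtain ⟨m, rfl⟩ : ∃ m, k = m + 3 := ⟨k - 3, by omega⟩
  have hsub : (SimpleGraph.cycleGraph (m + 3)).edgeFinset ⊆
      Finset.univ.filter (fun d : Sym2 (Fin (m + 3)) => ¬ d.IsDiag) := by
    intro d hd
    simp only [Finset.mem_filter, Finset.mem_univ, true_and]
    exact SimpleGraph.not_isDiag_of_mem_edgeSet _ (SimpleGraph.mem_edgeFinset.mp hd)
  have heq : nonEdges (m + 3) =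
      Finset.univ.filter (fun d : Sym2 (Fin (m + 3)) => ¬ d.IsDiag) \
        (SimpleGraph.cycleGraph (m + 3)).edgeFinset := by
    ext d
    simp [nonEdges, Finset.mem_sdiff, SimpleGraph.mem_edgeFinset, and_comm]
  rw [heq, Finset.card_sdiff_of_subset hsub, cycle_edgeFinset_card]
  congr 1
  rw [← Fintype.card_subtype, Sym2.card_subtype_not_diag, Fintype.card_fin]

lemma exists_badEvent {n k : ℕ} {ω : Sym2 (Fin n) → Bool} {S : Finset (Fin n)}
    (h : IsInducedCycle (graphOf ω) k S) : ∃ f : Fin k ↪ Fin n, ω ∈ badEvent n k f := by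
  obtain ⟨hcard, ⟨e⟩⟩ := h
  refine ⟨⟨fun i => (e.symm i : Fin n), ?_⟩, ?_⟩
  · intro i j hij
    have : e.symm i = e.symm j := Subtype.ext hij
    exact e.symm.injective this
  · intro d
    induction d using Sym2.ind with
    | _ i j =>
      intro hdiag hne
      rw [Sym2.isDiag_iff_proj_eq] at hdiag
      simp only [Sym2.map_pair_eq, Function.Embedding.coeFn_mk]
      have hne' : ¬ (SimpleGraph.cycleGraph k).Adj i j := fun h =>
        hne ((SimpleGraph.cycleGraph k).mem_edgeSet.mpr h)
      have hadj : ¬ ((graphOf ω).induce (S : Set (Fin n))).Adj (e.symm i) (e.symm j) := by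
        intro h
        exact hne' (e.symm.map_adj_iff.mp h)
      have hGadj : ¬ (graphOf ω).Adj (e.symm i : Fin n) (e.symm j : Fin n) := hadj
      have hij : (e.symm i : Fin n) ≠ (e.symm j : Fin n) := by
        intro h
        exact hdiag (e.symm.injective (Subtype.ext h))
      simp only [graphOf, SimpleGraph.fromEdgeSet_adj, Set.mem_setOf_eq, not_and] at hGadj
      have hnt : ω s((e.symm i : Fin n), (e.symm j : Fin n)) ≠ true := fun h => (hGadj h) hij
      exact Bool.eq_false_iff.mpr hnt

lemma measure_bad_le (n : ℕ) (q K : ℝ) (h0 : 0 ≤ q) (h1 : q ≤ 1) (hK3 : (3:ℝ) ≤ K) :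
    edgeMeasure n q {ω | ∃ k : ℕ, (k : ℝ) > K ∧ ∃ S : Finset (Fin n),
        IsInducedCycle (graphOf ω) k S}
      ≤ ∑ k ∈ (Finset.range (n+1)).filter (fun k : ℕ => (k : ℝ) > K),
          (n : ENNReal) ^ k * (ENNReal.ofReal (1 - q)) ^ (k.choose 2 - k) := by
  set F := (Finset.range (n+1)).filter (fun k : ℕ => (k : ℝ) > K) with hF
  have hsub : {ω : Sym2 (Fin n) → Bool | ∃ k : ℕ, (k : ℝ) > K ∧ ∃ S : Finset (Fin n),
      IsInducedCycle (graphOf ω) k S} ⊆ ⋃ k ∈ F, ⋃ f : Fin k ↪ Fin n, badEvent n k f := by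
    rintro ω ⟨k, hk, S, hS⟩
    have hkn : k ≤ n := by
      have h2 := Finset.card_le_univ S
      rw [hS.1] at h2
      simpa using h2
    obtain ⟨f, hf⟩ := exists_badEvent hS
    have hkF : k ∈ F := by
      rw [hF]
      exact Finset.mem_filter.mpr ⟨Finset.mem_range.mpr (by omega), hk⟩
    exact Set.mem_biUnion hkF (Set.mem_iUnion.mpr ⟨f, hf⟩)
  calc edgeMeasure n q _ ≤ edgeMeasure n q (⋃ k ∈ F, ⋃ f : Fin k ↪ Fin n, badEvent n k f) :=
        measure_mono hsub
    _ ≤ ∑ k ∈ F, edgeMeasure n q (⋃ f : Fin k ↪ Fin n, badEvent n k f) :=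
        measure_biUnion_finset_le F _
    _ ≤ ∑ k ∈ F, (n : ENNReal) ^ k * (ENNReal.ofReal (1 - q)) ^ (k.choose 2 - k) := by
        apply Finset.sum_le_sum
        intro k hk
        have hk3 : 3 ≤ k := by
          rw [hF, Finset.mem_filter] at hk
          have := hk.2
          exact_mod_cast (by push_cast; linarith : (3:ℝ) ≤ (k:ℝ))
        calc edgeMeasure n q (⋃ f : Fin k ↪ Fin n, badEvent n k f)
            ≤ ∑ f : Fin k ↪ Fin n, edgeMeasure n q (badEvent n k f) :=
              measure_iUnion_fintype_le _ _
          _ = (Fintype.card (Fin k ↪ Fin n) : ENNReal) *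
                (ENNReal.ofReal (1 - q)) ^ (k.choose 2 - k) := by
              rw [Finset.sum_congr rfl (fun f _ => by
                rw [measure_badEvent n k q h0 h1 f, nonEdges_card k hk3]),
                Finset.sum_const, Finset.card_univ, nsmul_eq_mul]
          _ ≤ (n : ENNReal) ^ k * (ENNReal.ofReal (1 - q)) ^ (k.choose 2 - k) := by
              apply mul_le_mul_left
              rw [Fintype.card_embedding_eq, Fintype.card_fin, Fintype.card_fin]
              calc ((n.descFactorial k : ℕ) : ENNReal) ≤ ((n ^ k : ℕ) : ENNReal) := by
                    exact_mod_cast Nat.cast_le.mpr (Nat.descFactorial_le_pow n k)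
                _ = (n : ENNReal) ^ k := by push_cast; ring

lemma term_le (n k : ℕ) (q : ℝ) (hn : 1 ≤ n) (hq1 : q ≤ 1) (hk3 : 3 ≤ k)
    (hbig : (k : ℝ) * (Real.log n - q * ((k : ℝ) - 3) / 2) ≤ -2 * Real.log n) :
    (n : ℝ) ^ k * (1 - q) ^ (k.choose 2 - k) ≤ Real.exp (-2 * Real.log n) := by
  have hkc : k ≤ k.choose 2 := by
    rw [Nat.choose_two_right]
    calc k = k * 2 / 2 := by omega
      _ ≤ k * (k - 1) / 2 := Nat.div_le_div_right (Nat.mul_le_mul_left k (by omega))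
  have hm : ((k.choose 2 - k : ℕ) : ℝ) = (k : ℝ) * ((k : ℝ) - 3) / 2 := by
    rw [Nat.cast_sub hkc, Nat.cast_choose_two]
    ring
  have h1 : (n : ℝ) ^ k = Real.exp ((k : ℝ) * Real.log n) := by
    rw [mul_comm, Real.exp_mul, Real.exp_log (by positivity)]
    norm_num
  have h2 : (1 - q) ^ (k.choose 2 - k) ≤ Real.exp (-(q * ((k:ℝ) * ((k:ℝ) - 3) / 2))) := by
    calc (1 - q) ^ (k.choose 2 - k) ≤ Real.exp (-q) ^ (k.choose 2 - k) := by
          apply pow_le_pow_left₀ (by linarith)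
          linarith [Real.add_one_le_exp (-q)]
      _ = Real.exp (-q * ((k.choose 2 - k : ℕ) : ℝ)) := by
          rw [← Real.exp_nat_mul]; ring_nf
      _ = Real.exp (-(q * ((k:ℝ) * ((k:ℝ) - 3) / 2))) := by rw [hm]; ring_nf
  calc (n : ℝ) ^ k * (1 - q) ^ (k.choose 2 - k)
      ≤ Real.exp ((k:ℝ) * Real.log n) * Real.exp (-(q * ((k:ℝ) * ((k:ℝ) - 3) / 2))) := by
        rw [h1]
        exact mul_le_mul_of_nonneg_left h2 (Real.exp_nonneg _)
    _ = Real.exp ((k:ℝ) * (Real.log n - q * ((k:ℝ) - 3) / 2)) := by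
        rw [← Real.exp_add]; ring_nf
    _ ≤ Real.exp (-2 * Real.log n) := Real.exp_le_exp.mpr hbig

lemma sum_le (n : ℕ) (q K : ℝ) (hn : 1 ≤ n) (hq0 : 0 ≤ q) (hq1 : q ≤ 1) (hK3 : (3:ℝ) ≤ K)
    (hbig : ∀ k : ℕ, K < (k : ℝ) →
      (k : ℝ) * (Real.log n - q * ((k : ℝ) - 3) / 2) ≤ -2 * Real.log n) :
    ∑ k ∈ (Finset.range (n+1)).filter (fun k : ℕ => (k : ℝ) > K),
        (n : ENNReal) ^ k * (ENNReal.ofReal (1 - q)) ^ (k.choose 2 - k)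
      ≤ ENNReal.ofReal (((n : ℝ) + 1) * Real.exp (-2 * Real.log n)) := by
  set F := (Finset.range (n+1)).filter (fun k : ℕ => (k : ℝ) > K) with hF
  have hterm : ∀ k ∈ F, (n : ENNReal) ^ k * (ENNReal.ofReal (1 - q)) ^ (k.choose 2 - k)
      ≤ ENNReal.ofReal (Real.exp (-2 * Real.log n)) := by
    intro k hk
    rw [hF, Finset.mem_filter] at hk
    have hk3 : 3 ≤ k := by exact_mod_cast (by linarith [hk.2] : (3:ℝ) ≤ (k:ℝ))
    have e1 : (n : ENNReal) ^ k * (ENNReal.ofReal (1 - q)) ^ (k.choose 2 - k)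
        = ENNReal.ofReal ((n : ℝ) ^ k * (1 - q) ^ (k.choose 2 - k)) := by
      rw [ENNReal.ofReal_mul (by positivity), ENNReal.ofReal_pow (by positivity),
        ENNReal.ofReal_pow (by linarith), ENNReal.ofReal_natCast]
    rw [e1]
    exact ENNReal.ofReal_le_ofReal (term_le n k q hn hq1 hk3 (hbig k hk.2))
  calc ∑ k ∈ F, (n : ENNReal) ^ k * (ENNReal.ofReal (1 - q)) ^ (k.choose 2 - k)
      ≤ F.card • ENNReal.ofReal (Real.exp (-2 * Real.log n)) :=
        Finset.sum_le_card_nsmul F _ _ hterm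
    _ ≤ (n + 1) • ENNReal.ofReal (Real.exp (-2 * Real.log n)) := by
        apply smul_le_smul_of_nonneg_right ?_ zero_le
        calc F.card ≤ (Finset.range (n+1)).card := Finset.card_filter_le _ _
          _ = n + 1 := Finset.card_range _
    _ = ENNReal.ofReal (((n : ℝ) + 1) * Real.exp (-2 * Real.log n)) := by
        rw [nsmul_eq_mul, ENNReal.ofReal_mul (by positivity)]
        congr 1
        rw [← ENNReal.ofReal_natCast (n+1)]
        push_cast
        ring_nf

/-- At density exactly $(\sqrt{1/2}+\epsilon)\sqrt{\log n / n}$, a.a.s. a random graph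
contains no induced k-cycle with $k > 3\sqrt{n \log n}$. -/
theorem aas_no_long_induced_cycle (ε : ℝ) (hε : 0 < ε) (p : ℕ → ℝ)
    (hpdef : ∀ n : ℕ, p n = (Real.sqrt (1 / 2) + ε) * Real.sqrt (Real.log n / n)) :
    Tendsto
      (fun n : ℕ =>
        edgeMeasure n (p n)
          {ω | ∀ k : ℕ, (k : ℝ) > 3 * Real.sqrt (n * Real.log n) →
            ∀ S : Finset (Fin n), ¬ IsInducedCycle (graphOf ω) k S})
      atTop (nhds 1) := by
  obtain ⟨c, hc⟩ : ∃ c : ℝ, c = Real.sqrt (1 / 2) + ε := ⟨_, rfl⟩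
  simp only [← hc] at hpdef
  have hc23 : 2/3 + ε ≤ c := by
    have h : (2/3 : ℝ) ≤ Real.sqrt (1/2) := by
      nlinarith [Real.sq_sqrt (by norm_num : (0:ℝ) ≤ 1/2), Real.sqrt_nonneg (1/2)]
    rw [hc]; linarith
  have hc0 : 0 < c := by
    rw [hc]; linarith [Real.sqrt_nonneg (1/2 : ℝ)]
  have hq0 : ∀ n : ℕ, 0 ≤ p n := fun n => by
    rw [hpdef n]; exact mul_nonneg hc0.le (Real.sqrt_nonneg _)
  -- limits
  have L1 : Tendsto (fun n : ℕ => Real.log n) atTop atTop :=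
    Real.tendsto_log_atTop.comp tendsto_natCast_atTop_atTop
  have L2 : Tendsto (fun n : ℕ => p n) atTop (nhds 0) := by
    have h0 : Tendsto (fun n : ℕ => Real.log n / n) atTop (nhds 0) :=
      Real.isLittleO_log_id_atTop.tendsto_div_nhds_zero.comp tendsto_natCast_atTop_atTop
    have h1 : Tendsto (fun n : ℕ => Real.sqrt (Real.log n / n)) atTop (nhds 0) := by
      have h := (Real.continuous_sqrt.tendsto 0).comp h0
      rw [Real.sqrt_zero] at h
      exact h
    have h2 := h1.const_mul c
    rw [mul_zero] at h2
    exact h2.congr (fun n => (hpdef n).symm)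
  have hsqrtTop : Tendsto Real.sqrt atTop atTop := by
    apply tendsto_atTop_atTop.mpr
    intro b
    refine ⟨b^2, fun x hx => ?_⟩
    rcases le_or_gt b 0 with hb | hb
    · exact hb.trans (Real.sqrt_nonneg x)
    · rw [show b = Real.sqrt (b^2) by rw [Real.sqrt_sq hb.le]]
      exact Real.sqrt_le_sqrt hx
  have L3 : Tendsto (fun n : ℕ => Real.sqrt (n * Real.log n)) atTop atTop :=
    hsqrtTop.comp (tendsto_natCast_atTop_atTop.atTop_mul_atTop₀ L1)
  -- eventual conditions
  have hev : ∀ᶠ n : ℕ in atTop, 1 ≤ n ∧ 1 ≤ Real.log n ∧ p n ≤ 1 ∧ 2/ε ≤ Real.log n ∧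
      2 ≤ (3*ε/4) * (3*Real.sqrt (n * Real.log n)) ∧
      (3:ℝ) ≤ 3*Real.sqrt (n * Real.log n) := by
    filter_upwards [eventually_ge_atTop 1, L1.eventually_ge_atTop 1,
      L2.eventually (eventually_le_nhds (by norm_num : (0:ℝ) < 1)),
      L1.eventually_ge_atTop (2/ε), L3.eventually_ge_atTop (8/(9*ε)),
      L3.eventually_ge_atTop 1] with n e1 e2 e3 e4 e5 e6
    refine ⟨e1, e2, e3, e4, ?_, by linarith⟩
    have : (3*ε/4) * (3 * (8/(9*ε))) ≤ (3*ε/4)*(3*Real.sqrt (n*Real.log n)) := by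
      apply mul_le_mul_of_nonneg_left (by linarith) (by positivity)
    have heq : (3*ε/4) * (3*(8/(9*ε))) = 2 := by field_simp; ring
    linarith
  -- the bad-set measure tends to 0
  have hr : Tendsto (fun n : ℕ => ((n:ℝ)+1) * Real.exp (-2 * Real.log n)) atTop (nhds 0) := by
    apply squeeze_zero' (by filter_upwards with n; positivity)
      ?_ (tendsto_const_div_atTop_nhds_zero_nat 2)
    filter_upwards [eventually_ge_atTop 1] with n hn1
    have hn0 : (0:ℝ) < n := by exact_mod_cast hn1
    have hn1' : (1:ℝ) ≤ n := by exact_mod_cast hn1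
    have hexp : Real.exp (-2 * Real.log n) = (n:ℝ)⁻¹ * (n:ℝ)⁻¹ := by
      rw [show (-2:ℝ) * Real.log n = -Real.log n + -Real.log n by ring, Real.exp_add,
        Real.exp_neg, Real.exp_log hn0]
    rw [hexp, div_eq_mul_inv]
    have h2n : (n:ℝ) + 1 ≤ 2 * n := by linarith
    calc ((n:ℝ)+1) * ((n:ℝ)⁻¹ * (n:ℝ)⁻¹) ≤ (2*(n:ℝ)) * ((n:ℝ)⁻¹ * (n:ℝ)⁻¹) :=
          mul_le_mul_of_nonneg_right h2n (by positivity)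
      _ = 2 * (n:ℝ)⁻¹ := by field_simp
  have hbad : Tendsto (fun n : ℕ => edgeMeasure n (p n)
      {ω | ∃ k : ℕ, (k : ℝ) > 3 * Real.sqrt (n * Real.log n) ∧ ∃ S : Finset (Fin n),
        IsInducedCycle (graphOf ω) k S}) atTop (nhds 0) := by
    have htop : Tendsto (fun n : ℕ =>
        ENNReal.ofReal (((n:ℝ)+1) * Real.exp (-2 * Real.log n))) atTop (nhds 0) := by
      have := ENNReal.tendsto_ofReal hr
      simpa using this
    apply tendsto_of_tendsto_of_tendsto_of_le_of_le' tendsto_const_nhds htop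
      (by filter_upwards with n; exact zero_le)
    filter_upwards [hev] with n hn
    obtain ⟨hn1, hlog1, hp1, hεl, hA5, hK3⟩ := hn
    have hn0 : (0:ℝ) < n := by exact_mod_cast hn1
    have hlog0 : (0:ℝ) ≤ Real.log n := by linarith
    have hsqrt : Real.sqrt (Real.log n / n) * Real.sqrt (n * Real.log n) = Real.log n := by
      rw [← Real.sqrt_mul (by positivity : (0:ℝ) ≤ Real.log n / n)]
      have h : Real.log n / n * ((n:ℝ) * Real.log n) = (Real.log n)^2 := by
        field_simp
      rw [h, Real.sqrt_sq hlog0]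
    have hKq : (3*Real.sqrt ((n:ℝ) * Real.log n)) * p n = 3 * c * Real.log n := by
      rw [hpdef n]
      calc 3*Real.sqrt ((n:ℝ)*Real.log n) * (c * Real.sqrt (Real.log n / n))
          = 3 * c * (Real.sqrt (Real.log n / n) * Real.sqrt ((n:ℝ)*Real.log n)) := by ring
        _ = 3 * c * Real.log n := by rw [hsqrt]
    have hbig : ∀ k : ℕ, 3*Real.sqrt ((n:ℝ) * Real.log n) < (k:ℝ) →
        (k : ℝ) * (Real.log n - p n * ((k : ℝ) - 3) / 2) ≤ -2 * Real.log n := by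
      intro k hk
      have hk0 : (0:ℝ) ≤ (k:ℝ) := Nat.cast_nonneg k
      have h1 : 3 * c * Real.log n ≤ (k:ℝ) * p n := by
        rw [← hKq]
        exact mul_le_mul_of_nonneg_right hk.le (hq0 n)
      have h2 : 3 * p n / 2 ≤ (3*ε/4) * Real.log n := by
        have ha : (3*ε/4) * (2/ε) ≤ (3*ε/4) * Real.log n :=
          mul_le_mul_of_nonneg_left hεl (by positivity)
        have heq : (3*ε/4)*(2/ε) = 3/2 := by field_simp; ring
        linarith
      have h3 : Real.log n - p n * ((k:ℝ)-3)/2 ≤ -(3*ε/4) * Real.log n := by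
        have hint : (2/3 + ε) * Real.log n ≤ c * Real.log n :=
          mul_le_mul_of_nonneg_right hc23 hlog0
        nlinarith [h1, h2, hint]
      have h4 : (k:ℝ) * (Real.log n - p n * ((k:ℝ)-3)/2) ≤
          (k:ℝ) * (-(3*ε/4) * Real.log n) := mul_le_mul_of_nonneg_left h3 hk0
      have h5 : (k:ℝ) * (-(3*ε/4) * Real.log n) ≤
          (3*Real.sqrt ((n:ℝ) * Real.log n)) * (-(3*ε/4) * Real.log n) := by
        apply mul_le_mul_of_nonpos_right hk.le
        have : 0 ≤ (3*ε/4) * Real.log n := by positivity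
        linarith
      have h6 : (3*Real.sqrt ((n:ℝ) * Real.log n)) * (-(3*ε/4) * Real.log n) ≤
          -2 * Real.log n := by
        nlinarith [mul_nonneg (by linarith : (0:ℝ) ≤ (3*ε/4) * (3*Real.sqrt ((n:ℝ)*Real.log n)) - 2) hlog0]
      linarith
    exact (measure_bad_le n (p n) (3*Real.sqrt ((n:ℝ) * Real.log n)) (hq0 n) hp1 hK3).trans
      (sum_le n (p n) (3*Real.sqrt ((n:ℝ) * Real.log n)) hn1 (hq0 n) hp1 hK3 hbig)
  -- conclude
  have hlow : Tendsto (fun n : ℕ => 1 - edgeMeasure n (p n)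
      {ω | ∃ k : ℕ, (k : ℝ) > 3 * Real.sqrt (n * Real.log n) ∧ ∃ S : Finset (Fin n),
        IsInducedCycle (graphOf ω) k S}) atTop (nhds 1) := by
    have := ENNReal.Tendsto.sub (tendsto_const_nhds (x := (1:ENNReal))) hbad
      (Or.inl ENNReal.one_ne_top)
    simpa using this
  apply tendsto_of_tendsto_of_tendsto_of_le_of_le' hlow tendsto_const_nhds
  · filter_upwards [hev] with n hn
    obtain ⟨hn1, hlog1, hp1, _, _, hK3⟩ := hn
    rw [tsub_le_iff_right]
    calc (1:ENNReal) = edgeMeasure n (p n) Set.univ :=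
          (edgeMeasure_univ n (p n) (hq0 n) hp1).symm
      _ ≤ edgeMeasure n (p n)
            ({ω | ∀ k : ℕ, (k : ℝ) > 3 * Real.sqrt (n * Real.log n) →
              ∀ S : Finset (Fin n), ¬ IsInducedCycle (graphOf ω) k S} ∪
             {ω | ∃ k : ℕ, (k : ℝ) > 3 * Real.sqrt (n * Real.log n) ∧ ∃ S : Finset (Fin n),
              IsInducedCycle (graphOf ω) k S}) := by
          apply measure_mono
          intro ω _
          by_cases h : ω ∈ {ω : Sym2 (Fin n) → Bool |
              ∀ k : ℕ, (k : ℝ) > 3 * Real.sqrt (n * Real.log n) →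
              ∀ S : Finset (Fin n), ¬ IsInducedCycle (graphOf ω) k S}
          · exact Or.inl h
          · right
            simp only [Set.mem_setOf_eq] at h ⊢
            push_neg at h
            exact h
      _ ≤ _ := measure_union_le _ _
  · filter_upwards [hev] with n hn
    calc edgeMeasure n (p n) _ ≤ edgeMeasure n (p n) Set.univ :=
          measure_mono (Set.subset_univ _)
      _ = 1 := edgeMeasure_univ n (p n) (hq0 n) hn.2.2.1
end

section
/- Let Γ be a finite simple graph, let k ≥ 5, and let C be an induced k-cycle in Γ. Then C is a Morse subgraph of Γ if and only if for every pair of non-adjacent vertices v, w of C, the common neighborhood link(v) ∩ link(w) induces a clique in Γ. -/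
open MeasureTheory Filter

set_option linter.unreachableTactic false
set_option linter.unusedTactic false

open SimpleGraph in
private lemma four_ne' (m : ℕ) : (4 : Fin (m+5)) ≠ 0 := by
  intro h
  have h2 : ((4 : Fin (m+5)) : ℕ) = ((0 : Fin (m+5)) : ℕ) := congrArg Fin.val h
  have h3 : ((4 : Fin (m+5)) : ℕ) = 4 % (m+5) := rfl
  have h4 : ((0 : Fin (m+5)) : ℕ) = 0 := rfl
  have h5 : 4 % (m+5) = 4 := Nat.mod_eq_of_lt (by omega)
  omega

open SimpleGraph Fin.CommRing in
private lemma cyc5' (m : ℕ) (a b c d : Fin (m+5)) (hab : a ≠ b) (hcd : c ≠ d)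
    (h1 : (cycleGraph (m+5)).Adj c a) (h2 : (cycleGraph (m+5)).Adj c b)
    (h3 : (cycleGraph (m+5)).Adj d a) (h4 : (cycleGraph (m+5)).Adj d b) : False := by
  rw [cycleGraph_adj (n := m+3)] at h1 h2 h3 h4
  rcases h1 with h1|h1 <;> rcases h2 with h2|h2 <;> rcases h3 with h3|h3 <;> rcases h4 with h4|h4 <;>
    first
    | exact hab (by linear_combination h1 - h2)
    | exact hab (by linear_combination h2 - h1)
    | exact hab (by linear_combination h3 - h4)
    | exact hab (by linear_combination h4 - h3)
    | exact hcd (by linear_combination h1 - h3)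
    | exact hcd (by linear_combination h3 - h1)
    | exact hcd (by linear_combination h2 - h4)
    | exact hcd (by linear_combination h4 - h2)
    | exact four_ne' m (by linear_combination (h1+h2+h3+h4))
    | exact four_ne' m (by linear_combination -(h1+h2+h3+h4))

open SimpleGraph in
private lemma c4_struct' : ∀ a b : Fin 4, a ≠ b → ¬(cycleGraph 4).Adj a b →
    (cycleGraph 4).Adj a (a+1) ∧ (cycleGraph 4).Adj b (a+1) ∧
    (cycleGraph 4).Adj a (a+3) ∧ (cycleGraph 4).Adj b (a+3) ∧
    a+1 ≠ a+3 ∧ ¬(cycleGraph 4).Adj (a+1) (a+3) := by decide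

open SimpleGraph in
private lemma four_cycle_iso {V : Type*} (G : SimpleGraph V) (v x w y : V)
    (hvx : G.Adj v x) (hxw : G.Adj x w) (hwy : G.Adj w y) (hyv : G.Adj y v)
    (hvw : ¬ G.Adj v w) (hxy : ¬ G.Adj x y) (hvw' : v ≠ w) (hxy' : x ≠ y) :
    Nonempty (G.induce ({v, x, w, y} : Set V) ≃g cycleGraph 4) := by
  have hvx' := hvx.ne
  have hxw' := hxw.ne
  have hwy' := hwy.ne
  have hyv' := hyv.ne
  set S : Set V := {v, x, w, y} with hS
  have hv : v ∈ S := by simp [hS]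
  have hx : x ∈ S := by simp [hS]
  have hw : w ∈ S := by simp [hS]
  have hy : y ∈ S := by simp [hS]
  let f : Fin 4 → S := ![⟨v, hv⟩, ⟨x, hx⟩, ⟨w, hw⟩, ⟨y, hy⟩]
  have hinj : Function.Injective f := by
    intro i j hij
    fin_cases i <;> fin_cases j <;> simp_all [f] <;> simp_all [Subtype.ext_iff] <;>
      first | rfl | (exfalso; tauto)
  have hsurj : Function.Surjective f := by
    rintro ⟨z, hz⟩
    simp only [hS, Set.mem_insert_iff, Set.mem_singleton_iff] at hz
    rcases hz with rfl | rfl | rfl | rfl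
    exacts [⟨0, rfl⟩, ⟨1, rfl⟩, ⟨2, rfl⟩, ⟨3, rfl⟩]
  refine ⟨(RelIso.symm ⟨Equiv.ofBijective f ⟨hinj, hsurj⟩, ?_⟩ : _)⟩
  intro i j
  show (G.induce S).Adj (f i) (f j) ↔ (cycleGraph 4).Adj i j
  fin_cases i <;> fin_cases j <;>
    simp [f, cycleGraph_adj, hvx, hxw, hwy, hyv, hvw, hxy,
      hvx.symm, hxw.symm, hwy.symm, hyv.symm] <;>
    first
    | decide
    | (intro h; first | exact hvw h | exact hxy h | exact hvw h.symm | exact hxy h.symm)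
    | exact iff_of_false (fun h => hvw h) (by decide)
    | exact iff_of_false (fun h => hxy h) (by decide)
    | exact iff_of_false (fun h => hvw h.symm) (by decide)
    | exact iff_of_false (fun h => hxy h.symm) (by decide)

/-- For k at least 5, an induced k-cycle C is Morse iff for every pair of non-adjacent
vertices v, w of C the common neighborhood of v and w is a clique. -/
theorem morse_iff_common_neighborhoods_cliques {V : Type*} [Fintype V]
    (G : SimpleGraph V) (k : ℕ) (hk : 5 ≤ k) (C : Finset V)
    (hC : IsInducedCycle G k C) :
    IsMorse G ↑C ↔
      ∀ v ∈ C, ∀ w ∈ C, v ≠ w → ¬ G.Adj v w →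
        G.IsClique (G.neighborSet v ∩ G.neighborSet w) := by
  classical
  obtain ⟨m, rfl⟩ : ∃ m, k = m + 5 := ⟨k - 5, by omega⟩
  obtain ⟨hcardC, ⟨eC⟩⟩ := hC
  constructor
  · -- Morse → cliques
    intro hM v hv w hw hvw hnadj x hx y hy hxy
    by_contra hadj
    obtain ⟨hxv, hxw⟩ := hx
    obtain ⟨hyv, hyw⟩ := hy
    rw [SimpleGraph.mem_neighborSet] at hxv hxw hyv hyw
    -- the 4-cycle v x w y
    have hiso := four_cycle_iso G v x w y hxv hxw.symm hyw hyv.symm hnadj hadj hvw hxy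
    set D : Finset V := {v, x, w, y} with hD
    have hDS : (↑D : Set V) = ({v, x, w, y} : Set V) := by simp [hD]
    have hcard : D.card = 4 := by
      have h1 : v ∉ ({x, w, y} : Finset V) := by
        simp only [Finset.mem_insert, Finset.mem_singleton]
        push_neg
        exact ⟨hxv.ne, hvw, hyv.ne⟩
      have h2 : x ∉ ({w, y} : Finset V) := by
        simp only [Finset.mem_insert, Finset.mem_singleton]
        push_neg
        exact ⟨hxw.ne', hxy⟩
      have h3 : w ∉ ({y} : Finset V) := by
        simp only [Finset.mem_singleton]
        exact hyw.ne
      rw [hD, Finset.card_insert_of_notMem h1, Finset.card_insert_of_notMem h2,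
        Finset.card_insert_of_notMem h3, Finset.card_singleton]
    have hsub : (↑D : Set V) ⊆ ↑C := by
      refine hM D ⟨hcard, hDS ▸ hiso⟩ ⟨v, by simp [hD], w, by simp [hD], ?_, ?_, hvw, hnadj⟩
      · exact_mod_cast hv
      · exact_mod_cast hw
    have hxC : x ∈ C := by exact_mod_cast hsub (by simp [hD] : x ∈ (↑D : Set V))
    have hyC : y ∈ C := by exact_mod_cast hsub (by simp [hD] : y ∈ (↑D : Set V))
    -- derive contradiction in the k-cycle
    have hvC' : v ∈ (↑C : Set V) := by exact_mod_cast hv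
    have hwC' : w ∈ (↑C : Set V) := by exact_mod_cast hw
    have hxC' : x ∈ (↑C : Set V) := by exact_mod_cast hxC
    have hyC' : y ∈ (↑C : Set V) := by exact_mod_cast hyC
    have hA : ∀ (p q : (↑C : Set V)), G.Adj ↑p ↑q →
        (SimpleGraph.cycleGraph (m+5)).Adj (eC p) (eC q) := by
      intro p q h
      exact eC.map_rel_iff.mpr h
    refine cyc5' m (eC ⟨v, hvC'⟩) (eC ⟨w, hwC'⟩) (eC ⟨x, hxC'⟩) (eC ⟨y, hyC'⟩)
      (fun h => hvw ?_) (fun h => hxy ?_)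
      (hA _ _ hxv.symm) (hA _ _ hxw.symm) (hA _ _ hyv.symm) (hA _ _ hyw.symm)
    · have := eC.toEquiv.injective h
      exact congrArg Subtype.val this
    · have := eC.toEquiv.injective h
      exact congrArg Subtype.val this
  · -- cliques → Morse
    rintro hcl D hD4 ⟨v, hvD, w, hwD, hvC, hwC, hvw, hnadj⟩
    exfalso
    obtain ⟨hcard4, ⟨e⟩⟩ := hD4
    have hvD' : v ∈ (↑D : Set V) := by exact_mod_cast hvD
    have hwD' : w ∈ (↑D : Set V) := by exact_mod_cast hwD
    set a := e ⟨v, hvD'⟩ with ha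
    set b := e ⟨w, hwD'⟩ with hb
    have hab : a ≠ b := fun h => hvw (congrArg Subtype.val (e.toEquiv.injective h))
    have hnadj' : ¬(SimpleGraph.cycleGraph 4).Adj a b := fun h =>
      hnadj (e.map_rel_iff.mp h)
    obtain ⟨q1, q2, q3, q4, q5, q6⟩ := c4_struct' a b hab hnadj'
    set x : V := ↑(e.symm (a+1)) with hxdef
    set y : V := ↑(e.symm (a+3)) with hydef
    have trans : ∀ (p : (↑D : Set V)) (z : Fin 4),
        (SimpleGraph.cycleGraph 4).Adj (e p) z → G.Adj ↑p ↑(e.symm z) := by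
      intro p z h
      have : (SimpleGraph.cycleGraph 4).Adj (e p) (e (e.symm z)) := by
        rwa [e.apply_symm_apply]
      exact e.map_rel_iff.mp this
    have hvx : G.Adj v x := trans ⟨v, hvD'⟩ (a+1) q1
    have hwx : G.Adj w x := trans ⟨w, hwD'⟩ (a+1) q2
    have hvy : G.Adj v y := trans ⟨v, hvD'⟩ (a+3) q3
    have hwy : G.Adj w y := trans ⟨w, hwD'⟩ (a+3) q4
    have hxy : x ≠ y := fun h =>
      q5 (e.toEquiv.symm.injective (Subtype.ext h))
    have hnxy : ¬ G.Adj x y := fun h => by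
      apply q6
      have := e.map_rel_iff.mpr (show (G.induce (↑D : Set V)).Adj (e.symm (a+1)) (e.symm (a+3)) from h)
      rwa [e.apply_symm_apply, e.apply_symm_apply] at this
    exact hnxy (hcl v hvC w hwC hvw hnadj ⟨hvx, hwx⟩ ⟨hvy, hwy⟩ hxy)
end

section
/- Let λ = √(1/2) and let ε > 0. Suppose p : ℕ → (0,1) satisfies n·p(n) → ∞ and p(n) < (λ − ε)·√(log n / n) for all sufficiently large n. For Γ ∈ G(n, p(n)), let X_n denote the number of sets S of 5 vertices such that S induces a 5-cycle in Γ and no vertex of Γ outside S is adjacent to two non-adjacent vertices of S. Then E[X_n] → ∞ as n → ∞. -/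
open MeasureTheory Filter

/-- No vertex of G outside S is adjacent to two non-adjacent vertices of S. -/
def NoOutsideCommonNbr {V : Type*} (G : SimpleGraph V) (S : Finset V) : Prop :=
  ∀ x ∉ S, ¬ ∃ v ∈ S, ∃ w ∈ S, v ≠ w ∧ ¬ G.Adj v w ∧ G.Adj x v ∧ G.Adj x w

open Finset
namespace MP

def pentB (i j : Fin 5) : Bool := decide (j = i + 1 ∨ i = j + 1)

lemma pentB_symm : ∀ i j : Fin 5, pentB i j = pentB j i := by decide

lemma bern_true (p : ℝ) : bernoulliBool p {true} = ENNReal.ofReal p := by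
  simp [bernoulliBool, Measure.dirac_apply]

lemma bern_false (p : ℝ) : bernoulliBool p {false} = ENNReal.ofReal (1 - p) := by
  simp [bernoulliBool, Measure.dirac_apply]

lemma bern_univ (p : ℝ) (h0 : 0 ≤ p) (h1 : p ≤ 1) : bernoulliBool p Set.univ = 1 := by
  simp [bernoulliBool, Measure.dirac_apply]
  rw [← ENNReal.ofReal_add h0 (by linarith)]
  norm_num

instance (p : ℝ) : IsFiniteMeasure (bernoulliBool p) := by
  constructor
  simp [bernoulliBool, Measure.dirac_apply]

def Pat0 : Finset (Finset (Fin 5)) :=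
  {∅} ∪ Finset.univ.image (fun i : Fin 5 => {i})
      ∪ Finset.univ.image (fun i : Fin 5 => {i, i + 1})

lemma Pat0_clique : ∀ T ∈ Pat0, ∀ i ∈ T, ∀ j ∈ T, i ≠ j → pentB i j = true := by decide

lemma qq_eval (P Q : ENNReal) :
    ∑ T ∈ Pat0, (P ^ T.card * Q ^ (5 - T.card)) = Q ^ 5 + 5 * (P * Q ^ 4) + 5 * (P ^ 2 * Q ^ 3) := by
  rw [Pat0, Finset.sum_union (by decide), Finset.sum_union (by decide)]
  congr 1
  · congr 1
    · simp
    · rw [Finset.sum_image (fun i _ j _ h => Finset.singleton_injective h)]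
      simp only [Finset.card_singleton]
      rw [Finset.sum_const]
      simp [nsmul_eq_mul, pow_one]
  · have hinj : ∀ i ∈ (univ : Finset (Fin 5)), ∀ j ∈ univ,
        ({i, i + 1} : Finset (Fin 5)) = {j, j + 1} → i = j := by decide
    rw [Finset.sum_image hinj]
    have hcard : ∀ i : Fin 5, ({i, i + 1} : Finset (Fin 5)).card = 2 := by decide
    simp only [hcard]
    rw [Finset.sum_const]
    simp [nsmul_eq_mul]

section S
variable {n : ℕ} (S : Finset (Fin n)) (hS : S.card = 5)

/-- enumeration of `S` -/
def av (i : Fin 5) : Fin n := (S.orderIsoOfFin hS i : Fin n)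

/-- inverse enumeration -/
def idx (v : Fin n) : Fin 5 :=
  if h : v ∈ S then (S.orderIsoOfFin hS).symm ⟨v, h⟩ else 0

lemma av_mem (i : Fin 5) : av S hS i ∈ S := (S.orderIsoOfFin hS i).2

lemma av_inj : Function.Injective (av S hS) := fun i j h => by
  have := (S.orderIsoOfFin hS).injective (Subtype.ext h); exact this

lemma idx_av (i : Fin 5) : idx S hS (av S hS i) = i := by
  rw [idx, dif_pos (av_mem S hS i)]
  have : (⟨av S hS i, av_mem S hS i⟩ : {x // x ∈ S}) = S.orderIsoOfFin hS i := rfl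
  rw [this, OrderIso.symm_apply_apply]

lemma av_idx {v : Fin n} (h : v ∈ S) : av S hS (idx S hS v) = v := by
  rw [idx, dif_pos h, av]
  rw [OrderIso.apply_symm_apply]

/-- the coordinate specification for the cylinder indexed by pattern `F` -/
def valF (F : Fin n → Finset (Fin 5)) : Sym2 (Fin n) → Option Bool :=
  Sym2.lift ⟨fun u v =>
    if u = v then none
    else if u ∈ S then
      (if v ∈ S then some (pentB (idx S hS u) (idx S hS v))
       else some (decide (idx S hS u ∈ F v)))
    else if v ∈ S then some (decide (idx S hS v ∈ F u)) else none,
    by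
      intro u v
      rcases eq_or_ne u v with rfl | h
      · rfl
      · dsimp only
        rw [if_neg h, if_neg h.symm]
        by_cases hu : u ∈ S <;> by_cases hv : v ∈ S <;> simp [hu, hv, pentB_symm]⟩

def Aset : Option Bool → Set Bool
  | some b => {b}
  | none => Set.univ

def Cyl (F : Fin n → Finset (Fin 5)) : Set (Sym2 (Fin n) → Bool) :=
  Set.univ.pi fun e => Aset (valF S hS F e)

lemma mem_Cyl {F : Fin n → Finset (Fin 5)} {ω : Sym2 (Fin n) → Bool} :
    ω ∈ Cyl S hS F ↔ ∀ e b, valF S hS F e = some b → ω e = b := by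
  constructor
  · intro h e b hb
    have := h e (Set.mem_univ e)
    simp only at this
    rw [hb] at this
    exact this
  · intro h e _
    simp only
    cases hv : valF S hS F e with
    | none => simp [Aset]
    | some b => rw [h e b hv]; simp [Aset]

lemma val_within {F : Fin n → Finset (Fin 5)} {i j : Fin 5} (hij : i ≠ j) :
    valF S hS F s(av S hS i, av S hS j) = some (pentB i j) := by
  have h1 : av S hS i ≠ av S hS j := fun h => hij (av_inj S hS h)
  simp only [valF, Sym2.lift_mk]
  rw [if_neg h1, if_pos (av_mem S hS i), if_pos (av_mem S hS j), idx_av, idx_av]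

lemma val_cross {F : Fin n → Finset (Fin 5)} {x : Fin n} (hx : x ∉ S) (i : Fin 5) :
    valF S hS F s(x, av S hS i) = some (decide (i ∈ F x)) := by
  have h1 : x ≠ av S hS i := fun h => hx (h ▸ av_mem S hS i)
  simp only [valF, Sym2.lift_mk]
  rw [if_neg h1, if_neg hx, if_pos (av_mem S hS i), idx_av]

def withinP : Finset (Sym2 (Fin n)) :=
  ((univ : Finset (Fin 5 × Fin 5)).filter fun z => z.1 < z.2).image
    fun z => s(av S hS z.1, av S hS z.2)

def crossP : Finset (Sym2 (Fin n)) :=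
  (((univ : Finset (Fin n)).filter (· ∉ S)) ×ˢ (univ : Finset (Fin 5))).image
    fun y => s(y.1, av S hS y.2)

lemma val_none {F : Fin n → Finset (Fin 5)} {e : Sym2 (Fin n)}
    (he : e ∉ withinP S hS ∪ crossP S hS) : valF S hS F e = none := by
  induction e using Sym2.ind with
  | _ u v =>
    simp only [valF, Sym2.lift_mk]
    rcases eq_or_ne u v with rfl | huv
    · simp
    rw [if_neg huv]
    by_cases hu : u ∈ S <;> by_cases hv : v ∈ S <;> simp only [hu, hv, if_pos, if_neg,
      if_true, if_false, not_false_iff]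
    · exfalso
      apply he
      rw [Finset.mem_union]
      left
      have hne : idx S hS u ≠ idx S hS v := by
        intro h
        apply huv
        rw [← av_idx S hS hu, ← av_idx S hS hv, h]
      rw [withinP, Finset.mem_image]
      rcases lt_or_gt_of_ne hne with h | h
      · exact ⟨(idx S hS u, idx S hS v), by simp [h], by
          rw [av_idx S hS hu, av_idx S hS hv]⟩
      · exact ⟨(idx S hS v, idx S hS u), by simp [h], by
          rw [av_idx S hS hu, av_idx S hS hv, Sym2.eq_swap]⟩
    · exfalso
      apply he
      rw [Finset.mem_union]
      right
      rw [crossP, Finset.mem_image]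
      exact ⟨(v, idx S hS u), by simp [hv], by rw [av_idx S hS hu, Sym2.eq_swap]⟩
    · exfalso
      apply he
      rw [Finset.mem_union]
      right
      rw [crossP, Finset.mem_image]
      exact ⟨(u, idx S hS v), by simp [hu], by rw [av_idx S hS hv]⟩

lemma disj_wc : Disjoint (withinP S hS) (crossP S hS) := by
  rw [Finset.disjoint_left]
  intro e hw hc
  simp only [withinP, crossP, Finset.mem_image, Finset.mem_filter, Finset.mem_product,
    Finset.mem_univ, true_and] at hw hc
  obtain ⟨z, _, rfl⟩ := hw
  obtain ⟨y, ⟨hy1, _⟩, he⟩ := hc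
  rw [Sym2.eq_iff] at he
  rcases he with ⟨h1, _⟩ | ⟨h1, _⟩
  · exact hy1 (h1 ▸ av_mem S hS z.1)
  · exact hy1 (h1 ▸ av_mem S hS z.2)

variable (p : ℝ)

lemma prod_within (hp0 : 0 ≤ p) (hp1 : p ≤ 1) (F : Fin n → Finset (Fin 5)) :
    ∏ e ∈ withinP S hS, bernoulliBool p (Aset (valF S hS F e)) =
      (ENNReal.ofReal p) ^ 5 * (ENNReal.ofReal (1 - p)) ^ 5 := by
  rw [withinP, Finset.prod_image ?hinj]
  case hinj =>
    intro z1 h1 z2 h2 he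
    simp only [Finset.mem_coe, Finset.mem_filter, Finset.mem_univ, true_and] at h1 h2
    rw [Sym2.eq_iff] at he
    rcases he with ⟨e1, e2⟩ | ⟨e1, e2⟩
    · exact Prod.ext (av_inj S hS e1) (av_inj S hS e2)
    · exfalso
      have a1 : z1.1 = z2.2 := av_inj S hS e1
      have a2 : z1.2 = z2.1 := av_inj S hS e2
      have h1' : z2.2 < z2.1 := a1 ▸ a2 ▸ h1
      exact absurd h2 (asymm h1')
  have hfac : ∀ z ∈ (univ.filter fun z : Fin 5 × Fin 5 => z.1 < z.2),
      bernoulliBool p (Aset (valF S hS F s(av S hS z.1, av S hS z.2))) =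
      (if pentB z.1 z.2 = true then ENNReal.ofReal p else ENNReal.ofReal (1 - p)) := by
    intro z hz
    simp only [Finset.mem_filter, Finset.mem_univ, true_and] at hz
    rw [val_within S hS (ne_of_lt hz)]
    cases h : pentB z.1 z.2 <;> simp [Aset, h, bern_true, bern_false]
  rw [Finset.prod_congr rfl hfac, Finset.prod_ite, Finset.prod_const, Finset.prod_const]
  have c1 : ((univ.filter fun z : Fin 5 × Fin 5 => z.1 < z.2).filter
      (fun z => pentB z.1 z.2 = true)).card = 5 := by decide
  have c2 : ((univ.filter fun z : Fin 5 × Fin 5 => z.1 < z.2).filter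
      (fun z => ¬pentB z.1 z.2 = true)).card = 5 := by decide
  rw [c1, c2]

lemma prod_cross (F : Fin n → Finset (Fin 5)) :
    ∏ e ∈ crossP S hS, bernoulliBool p (Aset (valF S hS F e)) =
      ∏ x ∈ (univ : Finset (Fin n)).filter (· ∉ S),
        ((ENNReal.ofReal p) ^ (F x).card * (ENNReal.ofReal (1 - p)) ^ (5 - (F x).card)) := by
  rw [crossP, Finset.prod_image ?hinj]
  case hinj =>
    intro y1 h1 y2 h2 he
    simp only [Finset.coe_filter, Finset.mem_product, Finset.mem_coe, Finset.mem_filter,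
      Finset.mem_univ, true_and, Set.mem_setOf_eq] at h1 h2
    rw [Sym2.eq_iff] at he
    rcases he with ⟨e1, e2⟩ | ⟨e1, e2⟩
    · exact Prod.ext e1 (av_inj S hS e2)
    · exact absurd (e1 ▸ av_mem S hS y2.2) h1.1
  rw [Finset.prod_product]
  refine Finset.prod_congr rfl fun x hx => ?_
  simp only [Finset.mem_filter, Finset.mem_univ, true_and] at hx
  have hfac : ∀ i ∈ (univ : Finset (Fin 5)),
      bernoulliBool p (Aset (valF S hS F s(x, av S hS i))) =
      (if i ∈ F x then ENNReal.ofReal p else ENNReal.ofReal (1 - p)) := by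
    intro i _
    rw [val_cross S hS hx i]
    by_cases h : i ∈ F x <;> simp [Aset, h, bern_true, bern_false]
  rw [Finset.prod_congr rfl hfac, Finset.prod_ite, Finset.prod_const, Finset.prod_const]
  have c1 : (univ : Finset (Fin 5)).filter (· ∈ F x) = F x := by
    ext i; simp
  have c2 : ((univ : Finset (Fin 5)).filter (· ∉ F x)).card = 5 - (F x).card := by
    have : (univ : Finset (Fin 5)).filter (· ∉ F x) = (F x)ᶜ := by
      ext i; simp
    rw [this, Finset.card_compl]
    rfl
  rw [c1, c2]

lemma measure_Cyl (hp0 : 0 ≤ p) (hp1 : p ≤ 1) (F : Fin n → Finset (Fin 5)) :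
    edgeMeasure n p (Cyl S hS F) =
      (ENNReal.ofReal p) ^ 5 * (ENNReal.ofReal (1 - p)) ^ 5 *
        ∏ x ∈ (univ : Finset (Fin n)).filter (· ∉ S),
          ((ENNReal.ofReal p) ^ (F x).card * (ENNReal.ofReal (1 - p)) ^ (5 - (F x).card)) := by
  rw [edgeMeasure, Cyl, Measure.pi_pi]
  rw [← Finset.prod_subset (Finset.subset_univ (withinP S hS ∪ crossP S hS))
      (fun e _ he => by rw [val_none S hS he]; exact bern_univ p hp0 hp1)]
  rw [Finset.prod_union (disj_wc S hS), prod_within S hS p hp0 hp1 F, prod_cross S hS p F]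

def Fam : Finset (Fin n → Finset (Fin 5)) :=
  Fintype.piFinset fun x : Fin n => if x ∈ S then ({∅} : Finset (Finset (Fin 5))) else Pat0

lemma Fam_mem_S {F : Fin n → Finset (Fin 5)} (hF : F ∈ Fam S) {x : Fin n} (hx : x ∈ S) :
    F x = ∅ := by
  have := Fintype.mem_piFinset.1 hF x
  rw [if_pos hx] at this
  simpa using this

lemma Fam_mem_Pat0 {F : Fin n → Finset (Fin 5)} (hF : F ∈ Fam S) {x : Fin n} (hx : x ∉ S) :
    F x ∈ Pat0 := by
  have := Fintype.mem_piFinset.1 hF x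
  rwa [if_neg hx] at this

def GoodE : Set (Sym2 (Fin n) → Bool) := ⋃ F ∈ Fam S, Cyl S hS F

lemma Cyl_disjoint {F G : Fin n → Finset (Fin 5)} (hF : F ∈ Fam S) (hG : G ∈ Fam S)
    (hne : F ≠ G) : Disjoint (Cyl S hS F) (Cyl S hS G) := by
  rw [Set.disjoint_left]
  intro ω hωF hωG
  obtain ⟨x, hx⟩ : ∃ x, F x ≠ G x := by
    by_contra h
    push_neg at h
    exact hne (funext h)
  have hxS : x ∉ S := by
    intro hxS
    exact hx ((Fam_mem_S S hF hxS).trans (Fam_mem_S S hG hxS).symm)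
  obtain ⟨i, hi⟩ : ∃ i, ¬(i ∈ F x ↔ i ∈ G x) := by
    by_contra h
    push_neg at h
    exact hx (Finset.ext fun i => h i)
  have e1 := (mem_Cyl S hS).1 hωF s(x, av S hS i) _ (val_cross S hS hxS i)
  have e2 := (mem_Cyl S hS).1 hωG s(x, av S hS i) _ (val_cross S hS hxS i)
  rw [e1] at e2
  apply hi
  constructor <;> intro h
  · have : decide (i ∈ F x) = true := by simp [h]
    rw [this] at e2
    simpa using e2.symm
  · have : decide (i ∈ G x) = true := by simp [h]
    rw [this] at e2
    simpa using e2

lemma measurableSet_Cyl (F : Fin n → Finset (Fin 5)) : MeasurableSet (Cyl S hS F) :=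
  MeasurableSet.of_discrete

include hS in
lemma card_filter_not_mem : ((univ : Finset (Fin n)).filter (· ∉ S)).card = n - 5 := by
  have : (univ : Finset (Fin n)).filter (· ∉ S) = Sᶜ := by ext x; simp
  rw [this, Finset.card_compl, hS, Fintype.card_fin]

lemma measure_GoodE (hp0 : 0 ≤ p) (hp1 : p ≤ 1) :
    edgeMeasure n p (GoodE S hS) =
      (ENNReal.ofReal p) ^ 5 * (ENNReal.ofReal (1 - p)) ^ 5 *
        ((ENNReal.ofReal (1 - p)) ^ 5
          + 5 * (ENNReal.ofReal p * (ENNReal.ofReal (1 - p)) ^ 4)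
          + 5 * ((ENNReal.ofReal p) ^ 2 * (ENNReal.ofReal (1 - p)) ^ 3)) ^ (n - 5) := by
  set P := ENNReal.ofReal p
  set Q := ENNReal.ofReal (1 - p)
  rw [GoodE, measure_biUnion_finset ?hd (fun F _ => measurableSet_Cyl S hS F)]
  case hd =>
    intro F hF G hG hne
    exact Cyl_disjoint S hS (by simpa using hF) (by simpa using hG) hne
  have hterm : ∀ F ∈ Fam S, edgeMeasure n p (Cyl S hS F) =
      P ^ 5 * Q ^ 5 * ∏ x : Fin n,
        (if x ∈ S then 1 else P ^ (F x).card * Q ^ (5 - (F x).card)) := by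
    intro F _
    rw [measure_Cyl S hS p hp0 hp1 F]
    congr 1
    rw [← Finset.prod_filter_mul_prod_filter_not univ (fun x => x ∉ S)]
    have h1 : ∀ x ∈ univ.filter (fun x : Fin n => x ∉ S),
        (if x ∈ S then 1 else P ^ (F x).card * Q ^ (5 - (F x).card)) =
          P ^ (F x).card * Q ^ (5 - (F x).card) := by
      intro x hx
      simp only [Finset.mem_filter] at hx
      rw [if_neg hx.2]
    have h2 : ∀ x ∈ univ.filter (fun x : Fin n => ¬x ∉ S),
        (if x ∈ S then 1 else P ^ (F x).card * Q ^ (5 - (F x).card)) = 1 := by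
      intro x hx
      simp only [Finset.mem_filter, not_not] at hx
      rw [if_pos hx.2]
    rw [Finset.prod_congr rfl h1, Finset.prod_congr rfl h2, Finset.prod_const_one, mul_one]
  rw [Finset.sum_congr rfl hterm, ← Finset.mul_sum]
  congr 1
  rw [Fam, ← Finset.prod_univ_sum
    (fun x : Fin n => if x ∈ S then ({∅} : Finset (Finset (Fin 5))) else Pat0)
    (fun x T => if x ∈ S then 1 else P ^ T.card * Q ^ (5 - T.card))]
  have hx : ∀ x : Fin n,
      (∑ T ∈ (if x ∈ S then ({∅} : Finset (Finset (Fin 5))) else Pat0),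
        (if x ∈ S then 1 else P ^ T.card * Q ^ (5 - T.card))) =
      (if x ∈ S then 1 else
        (Q ^ 5 + 5 * (P * Q ^ 4) + 5 * (P ^ 2 * Q ^ 3))) := by
    intro x
    by_cases h : x ∈ S
    · simp [h]
    · rw [if_neg h, if_neg h]
      rw [← qq_eval P Q]
      exact Finset.sum_congr rfl fun T _ => by rw [if_neg h]
  rw [Finset.prod_congr rfl (fun x _ => hx x), Finset.prod_ite, Finset.prod_const,
    Finset.prod_const, one_pow, one_mul, card_filter_not_mem S hS]

end S

lemma pentB_cycle : ∀ i j : Fin 5,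
    (SimpleGraph.cycleGraph 5).Adj i j ↔ (i ≠ j ∧ pentB i j = true) := by decide

lemma graphOf_adj {n : ℕ} {ω : Sym2 (Fin n) → Bool} {u v : Fin n} :
    (graphOf ω).Adj u v ↔ ω s(u, v) = true ∧ u ≠ v := by
  simp only [graphOf, SimpleGraph.fromEdgeSet_adj, Set.mem_setOf_eq]

section S2
variable {n : ℕ} (S : Finset (Fin n)) (hS : S.card = 5)

lemma goodE_implies {ω : Sym2 (Fin n) → Bool} (hω : ω ∈ GoodE S hS) :
    IsInducedCycle (graphOf ω) 5 S ∧ NoOutsideCommonNbr (graphOf ω) S := by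
  rw [GoodE, Set.mem_iUnion₂] at hω
  obtain ⟨F, hF, hc⟩ := hω
  have h1 : ∀ i j : Fin 5, i ≠ j → ω s(av S hS i, av S hS j) = pentB i j :=
    fun i j hij => (mem_Cyl S hS).1 hc _ _ (val_within S hS hij)
  have h2 : ∀ x, x ∉ S → ∀ i : Fin 5, ω s(x, av S hS i) = decide (i ∈ F x) :=
    fun x hx i => (mem_Cyl S hS).1 hc _ _ (val_cross S hS hx i)
  constructor
  · refine ⟨hS, ⟨?_⟩⟩
    let eS : Fin 5 ≃ {x // x ∈ (S : Set (Fin n))} :=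
      (S.orderIsoOfFin hS).toEquiv.trans (Equiv.subtypeEquivRight (fun x => Iff.rfl))
    refine ⟨eS.symm, ?_⟩
    intro u v
    have key : ∀ w : {x // x ∈ (S : Set (Fin n))}, (w : Fin n) = av S hS (eS.symm w) := by
      intro w
      conv_lhs => rw [← Equiv.apply_symm_apply eS w]
      rfl
    have hu := key u
    have hv := key v
    rw [pentB_cycle]
    constructor
    · rintro ⟨hne, hpent⟩
      have hval := h1 _ _ hne
      show (graphOf ω).Adj ↑u ↑v
      rw [graphOf_adj, hu, hv]
      exact ⟨by rw [hval, hpent], fun h => hne (av_inj S hS h)⟩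
    · intro hadj
      have hadj' : (graphOf ω).Adj ↑u ↑v := hadj
      rw [graphOf_adj, hu, hv] at hadj'
      have hne : eS.symm u ≠ eS.symm v := fun h => hadj'.2 (by rw [h])
      exact ⟨hne, by rw [← h1 _ _ hne, hadj'.1]⟩
  · intro x hx h
    obtain ⟨v, hv, w, hw, hvw, hnadj, haxv, haxw⟩ := h
    have hi : idx S hS v ∈ F x := by
      have := h2 x hx (idx S hS v)
      rw [av_idx S hS hv] at this
      have h3 := (graphOf_adj.1 haxv).1
      rw [h3] at this
      exact of_decide_eq_true this.symm
    have hj : idx S hS w ∈ F x := by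
      have := h2 x hx (idx S hS w)
      rw [av_idx S hS hw] at this
      have h3 := (graphOf_adj.1 haxw).1
      rw [h3] at this
      exact of_decide_eq_true this.symm
    have hij : idx S hS v ≠ idx S hS w := by
      intro h
      apply hvw
      rw [← av_idx S hS hv, ← av_idx S hS hw, h]
    have hpent := Pat0_clique (F x) (Fam_mem_Pat0 S hF hx) _ hi _ hj hij
    apply hnadj
    rw [graphOf_adj]
    refine ⟨?_, hvw⟩
    have := h1 _ _ hij
    rw [av_idx S hS hv, av_idx S hS hw] at this
    rw [this, hpent]

end S2

noncomputable def qreal (p : ℝ) : ℝ :=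
  (1 - p) ^ 5 + 5 * (p * (1 - p) ^ 4) + 5 * (p ^ 2 * (1 - p) ^ 3)

section Int
variable {n : ℕ} (p : ℝ)

lemma measure_GoodE_real (S : Finset (Fin n)) (hS : S.card = 5) (hp0 : 0 ≤ p) (hp1 : p ≤ 1) :
    edgeMeasure n p (GoodE S hS) =
      ENNReal.ofReal (p ^ 5 * (1 - p) ^ 5 * (qreal p) ^ (n - 5)) := by
  rw [measure_GoodE S hS p hp0 hp1, qreal]
  have h1 : (0:ℝ) ≤ 1 - p := by linarith
  rw [ENNReal.ofReal_mul (by positivity), ENNReal.ofReal_mul (by positivity)]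
  rw [ENNReal.ofReal_pow hp0, ENNReal.ofReal_pow h1, ENNReal.ofReal_pow (by positivity)]
  congr 1
  rw [ENNReal.ofReal_add (by positivity) (by positivity),
      ENNReal.ofReal_add (by positivity) (by positivity),
      ENNReal.ofReal_mul (by norm_num : (0:ℝ) ≤ 5), ENNReal.ofReal_mul (by norm_num : (0:ℝ) ≤ 5),
      ENNReal.ofReal_mul hp0, ENNReal.ofReal_mul (by positivity),
      ENNReal.ofReal_pow h1, ENNReal.ofReal_pow hp0, ENNReal.ofReal_pow h1,
      ENNReal.ofReal_pow h1]
  norm_num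

lemma isProb (hp0 : 0 ≤ p) (hp1 : p ≤ 1) : IsProbabilityMeasure (edgeMeasure n p) := by
  constructor
  rw [edgeMeasure, Measure.pi_univ]
  simp only [bern_univ p hp0 hp1]
  simp

def GoodE' (S : Finset (Fin n)) : Set (Sym2 (Fin n) → Bool) :=
  if h : S.card = 5 then GoodE S h else ∅

lemma integral_ge (hp0 : 0 < p) (hp1 : p < 1) :
    (n.choose 5 : ℝ) * (p ^ 5 * (1 - p) ^ 5 * (qreal p) ^ (n - 5)) ≤
      ∫ ω, (Nat.card {S : Finset (Fin n) //
          IsInducedCycle (graphOf ω) 5 S ∧ NoOutsideCommonNbr (graphOf ω) S} : ℝ)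
        ∂(edgeMeasure n p) := by
  classical
  haveI := isProb (n := n) p hp0.le hp1.le
  set μ := edgeMeasure n p with hμ
  set P5 := Finset.powersetCard 5 (univ : Finset (Fin n)) with hP5
  set g : (Sym2 (Fin n) → Bool) → ℝ := fun ω =>
    ∑ S ∈ P5, Set.indicator (GoodE' (n := n) S) (fun _ => (1:ℝ)) ω with hg
  have hgf : ∀ ω, g ω ≤ (Nat.card {S : Finset (Fin n) //
      IsInducedCycle (graphOf ω) 5 S ∧ NoOutsideCommonNbr (graphOf ω) S} : ℝ) := by
    intro ω
    have e1 : g ω = ((P5.filter fun S => ω ∈ GoodE' (n := n) S).card : ℝ) := by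
      rw [hg, ← Finset.sum_boole]
      exact Finset.sum_congr rfl fun S _ => Set.indicator_apply _ _ _
    rw [e1]
    have hprop : ∀ S ∈ P5.filter fun S => ω ∈ GoodE' (n := n) S,
        IsInducedCycle (graphOf ω) 5 S ∧ NoOutsideCommonNbr (graphOf ω) S := by
      intro S hx
      rw [Finset.mem_filter] at hx
      have h5 : S.card = 5 := Finset.mem_powersetCard_univ.1 hx.1
      have := hx.2
      rw [GoodE', dif_pos h5] at this
      exact goodE_implies S h5 this
    have hinj : Function.Injective
        (fun Sh : {x // x ∈ P5.filter fun S => ω ∈ GoodE' (n := n) S} =>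
          (⟨Sh.1, hprop Sh.1 Sh.2⟩ :
            {S : Finset (Fin n) //
              IsInducedCycle (graphOf ω) 5 S ∧ NoOutsideCommonNbr (graphOf ω) S})) := by
      intro x y h
      simp only [Subtype.mk.injEq] at h
      exact Subtype.ext h
    have hle := Nat.card_le_card_of_injective _ hinj
    rw [Nat.card_eq_finsetCard] at hle
    exact_mod_cast hle
  have hInt : ∀ f : (Sym2 (Fin n) → Bool) → ℝ, Integrable f μ :=
    fun f => Integrable.of_finite
  refine le_trans ?_ (integral_mono (hInt g) (hInt _) hgf)
  rw [hg, integral_finset_sum _ (fun S _ => hInt _)]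
  have hterm : ∀ S ∈ P5,
      (∫ ω, Set.indicator (GoodE' (n := n) S) (fun _ => (1:ℝ)) ω ∂μ) =
        p ^ 5 * (1 - p) ^ 5 * (qreal p) ^ (n - 5) := by
    intro S hx
    have h5 : S.card = 5 := Finset.mem_powersetCard_univ.1 hx
    rw [integral_indicator_const (1:ℝ) MeasurableSet.of_discrete]
    have h1p : (0:ℝ) ≤ 1 - p := by linarith
    have hq : 0 ≤ qreal p := by
      rw [qreal]
      have := hp0.le
      positivity
    rw [GoodE', dif_pos h5, hμ, measureReal_def, measure_GoodE_real p S h5 hp0.le hp1.le]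
    rw [ENNReal.toReal_ofReal (by positivity)]
    simp
  rw [Finset.sum_congr rfl hterm, Finset.sum_const, hP5,
    Finset.card_powersetCard, Finset.card_univ, Fintype.card_fin, nsmul_eq_mul]

end Int


lemma choose5_ge {n : ℕ} (hn : 8 ≤ n) : ((n:ℝ)/2)^5 / 120 ≤ (n.choose 5 : ℝ) := by
  have h1 : (n-4)^5 ≤ n.descFactorial 5 := by
    have e : n.descFactorial 5 = (n-4)*((n-3)*((n-2)*((n-1)*((n-0)*1)))) := by
      simp [Nat.descFactorial_succ, Nat.descFactorial_zero, Nat.mul_assoc]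
    rw [e]
    have e2 : (n-4)^5 = (n-4)*((n-4)*((n-4)*((n-4)*((n-4)*1)))) := by ring
    rw [e2]
    gcongr <;> omega
  have h2 : n.descFactorial 5 = 120 * n.choose 5 := by
    rw [Nat.descFactorial_eq_factorial_mul_choose]
    norm_num [Nat.factorial]
  have h3 : ((n:ℝ) - 4)^5 ≤ ((n - 4 : ℕ) : ℝ)^5 := by
    apply pow_le_pow_left₀ (by
      have : (8:ℝ) ≤ (n:ℝ) := by exact_mod_cast hn
      linarith)
    · push_cast [Nat.cast_sub (by omega : 4 ≤ n)]
      linarith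
  have h4 : ((n:ℝ)/2)^5 ≤ ((n:ℝ) - 4)^5 := by
    apply pow_le_pow_left₀ (by positivity)
    have : (8:ℝ) ≤ (n:ℝ) := by exact_mod_cast hn
    linarith
  have h5 : ((n - 4 : ℕ) : ℝ)^5 ≤ 120 * (n.choose 5 : ℝ) := by
    have := h2 ▸ h1
    exact_mod_cast this
  linarith

lemma exp_le_one_sub {x δ : ℝ} (hx : 0 ≤ x) (hδ : 0 < δ) (h : x * (1 + δ) ≤ δ) :
    Real.exp (-((1 + δ) * x)) ≤ 1 - x := by
  set y := (1 + δ) * x with hy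
  have hy0 : 0 ≤ y := by positivity
  have h1 : 1 + y ≤ Real.exp y := by linarith [Real.add_one_le_exp y]
  have hE0 : 0 < Real.exp (-y) := Real.exp_pos _
  have hE1 : Real.exp (-y) * Real.exp y = 1 := by
    rw [← Real.exp_add]; simp
  have h2 : Real.exp (-y) * (1 + y) ≤ 1 := by
    calc Real.exp (-y) * (1 + y) ≤ Real.exp (-y) * Real.exp y :=
          mul_le_mul_of_nonneg_left h1 hE0.le
      _ = 1 := hE1
  have h3 : 1 ≤ (1 - x) * (1 + y) := by nlinarith
  nlinarith [mul_pos hE0 (show (0:ℝ) < 1 + y by linarith)]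

lemma qreal_ge {p : ℝ} (hp0 : 0 ≤ p) (hp1 : p ≤ 1) : 1 - 5 * p^2 ≤ qreal p := by
  have e : qreal p - (1 - 5*p^2) = p^3 * (5 - p^2) := by rw [qreal]; ring
  nlinarith [pow_nonneg hp0 3, sq_nonneg p, mul_nonneg (pow_nonneg hp0 3) (show (0:ℝ) ≤ 5 - p^2 by nlinarith)]

lemma analysis (ε : ℝ) (hε : 0 < ε) (p : ℕ → ℝ) (hp : ∀ n, 0 < p n ∧ p n < 1)
    (hnp : Tendsto (fun n : ℕ => (n : ℝ) * p n) atTop atTop)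
    (hlt : ∀ᶠ n : ℕ in atTop,
      p n < (Real.sqrt (1 / 2) - ε) * Real.sqrt (Real.log n / n)) :
    Tendsto (fun n : ℕ =>
      (n.choose 5 : ℝ) * (p n ^ 5 * (1 - p n) ^ 5 * (qreal (p n)) ^ (n - 5)))
      atTop atTop := by
  rcases le_or_gt (Real.sqrt (1/2) - ε) 0 with hlam0 | hlam0
  · exfalso
    obtain ⟨n, hn⟩ := hlt.exists
    have h1 : (Real.sqrt (1/2) - ε) * Real.sqrt (Real.log n / n) ≤ 0 :=
      mul_nonpos_of_nonpos_of_nonneg hlam0 (Real.sqrt_nonneg _)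
    linarith [(hp n).1]
  obtain ⟨δ, hδ, hδhalf, hlamsq⟩ :
      ∃ δ : ℝ, 0 < δ ∧ δ ≤ 1/2 ∧ (Real.sqrt (1/2) - ε)^2 = 1/2 - δ := by
    refine ⟨1/2 - (Real.sqrt (1/2) - ε)^2, ?_, ?_, by ring⟩
    · have h1 : Real.sqrt (1/2) - ε < Real.sqrt (1/2) := by linarith
      have h2 : (Real.sqrt (1/2) - ε)^2 < 1/2 := by
        have := mul_self_lt_mul_self hlam0.le h1
        rw [Real.mul_self_sqrt (by norm_num)] at this
        nlinarith
      linarith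
    · nlinarith [sq_nonneg (Real.sqrt (1/2) - ε)]
  -- p tends to 0
  have hdiv : Tendsto (fun n : ℕ => Real.log n / n) atTop (nhds 0) :=
    (Real.isLittleO_log_id_atTop.tendsto_div_nhds_zero).comp tendsto_natCast_atTop_atTop
  have hs : Tendsto (fun n : ℕ => (Real.sqrt (1/2) - ε) * Real.sqrt (Real.log n / n))
      atTop (nhds 0) := by
    have h1 : Tendsto (fun n : ℕ => Real.sqrt (Real.log n / n)) atTop (nhds 0) := by
      have := (Real.continuous_sqrt.tendsto' 0 0 (by simp)).comp hdiv
      exact this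
    simpa using h1.const_mul (Real.sqrt (1/2) - ε)
  have hp0 : Tendsto p atTop (nhds 0) := by
    apply tendsto_of_tendsto_of_tendsto_of_le_of_le' (tendsto_const_nhds) hs
    · exact Eventually.of_forall fun n => (hp n).1.le
    · exact hlt.mono fun n h => h.le
  -- eventual bound on t = n p^2
  have htb : ∀ᶠ n : ℕ in atTop, (n:ℝ) * p n ^ 2 < (1/2 - δ) * Real.log n := by
    filter_upwards [hlt, eventually_ge_atTop 1] with n h1 h2
    have hn1 : (1:ℝ) ≤ (n:ℝ) := by exact_mod_cast h2
    have hn0 : (0:ℝ) < (n:ℝ) := by linarith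
    have hlog0 : 0 ≤ Real.log n := Real.log_nonneg hn1
    have hLN : 0 ≤ Real.log n / n := div_nonneg hlog0 hn0.le
    have hq2 : p n ^ 2 < (Real.sqrt (1/2) - ε)^2 * (Real.log n / n) := by
      have hm := mul_self_lt_mul_self (hp n).1.le h1
      calc p n ^ 2 = p n * p n := by ring
        _ < ((Real.sqrt (1/2) - ε) * Real.sqrt (Real.log n / n)) *
            ((Real.sqrt (1/2) - ε) * Real.sqrt (Real.log n / n)) := hm
        _ = (Real.sqrt (1/2) - ε)^2 *
            (Real.sqrt (Real.log n / n) * Real.sqrt (Real.log n / n)) := by ring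
        _ = (Real.sqrt (1/2) - ε)^2 * (Real.log n / n) := by rw [Real.mul_self_sqrt hLN]
    calc (n:ℝ) * p n ^ 2 < (n:ℝ) * ((Real.sqrt (1/2) - ε)^2 * (Real.log n / n)) :=
          (mul_lt_mul_iff_right₀ hn0).2 hq2
      _ = (Real.sqrt (1/2) - ε)^2 * Real.log n := by field_simp; try ring
      _ = (1/2 - δ) * Real.log n := by rw [hlamsq]
  -- the exponent tends to infinity
  have hlogu : Tendsto (fun n : ℕ => Real.log ((n:ℝ) * p n)) atTop atTop :=
    Real.tendsto_log_atTop.comp hnp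
  have hA1 : Tendsto (fun n : ℕ => (5/2) * Real.log ((n:ℝ) * p n)) atTop atTop :=
    hlogu.const_mul_atTop (by norm_num)
  have hA2 : Tendsto (fun n : ℕ => (5*δ/4) * Real.log n - (5/2) * Real.log 4) atTop atTop := by
    apply tendsto_atTop_add_const_right
    exact (Real.tendsto_log_atTop.comp tendsto_natCast_atTop_atTop).const_mul_atTop
      (by positivity)
  have hHbound : ∀ᶠ n : ℕ in atTop,
      min ((5/2) * Real.log ((n:ℝ) * p n))
        ((5*δ/4) * Real.log n - (5/2) * Real.log 4) ≤
      5 * Real.log ((n:ℝ) * p n) - 5 * (1 + δ) * ((n:ℝ) * p n ^ 2) := by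
    filter_upwards [htb, hlogu.eventually_ge_atTop 1, eventually_ge_atTop 1]
      with n ht hL1 hn1
    have hn0 : (0:ℝ) < (n:ℝ) := by exact_mod_cast Nat.lt_of_lt_of_le Nat.zero_lt_one hn1
    have hq0 : 0 < p n := (hp n).1
    have ht0 : 0 < (n:ℝ) * p n ^ 2 := by positivity
    have hlogn0 : 0 ≤ Real.log n := Real.log_nonneg (by exact_mod_cast hn1)
    set L := Real.log ((n:ℝ) * p n) with hLdef
    set t := (n:ℝ) * p n ^ 2 with htdef
    have e2 : 2 * L = Real.log n + Real.log t := by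
      have e3 : ((n:ℝ) * p n)^2 = (n:ℝ) * t := by rw [htdef]; ring
      have e4 : Real.log (((n:ℝ) * p n)^2) = 2 * L := by
        rw [Real.log_pow]; push_cast [hLdef]; ring
      rw [← e4, e3, Real.log_mul (ne_of_gt hn0) (ne_of_gt (by positivity))]
    rcases le_or_gt (5 * (1 + δ) * t) ((5/2) * L) with hcase | hcase
    · refine le_trans (min_le_left _ _) ?_
      linarith
    · refine le_trans (min_le_right _ _) ?_
      have ht4 : L / 4 ≤ t := by nlinarith
      have ht14 : 1/4 ≤ t := by linarith
      have hlogt : -Real.log 4 ≤ Real.log t := by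
        have := Real.log_le_log (by norm_num : (0:ℝ) < 1/4) ht14
        rw [show (1:ℝ)/4 = 4⁻¹ by norm_num, Real.log_inv] at this
        linarith
      have hcoef : 5 * (1 + δ) * ((1/2 - δ) * Real.log n) ≤
          (5/2 - 5*δ/4) * Real.log n := by
        nlinarith [mul_nonneg hlogn0 hδ.le, mul_nonneg hlogn0 (mul_nonneg hδ.le hδ.le)]
      have hstep : 5 * (1 + δ) * t ≤ 5 * (1 + δ) * ((1/2 - δ) * Real.log n) :=
        mul_le_mul_of_nonneg_left (le_of_lt ht) (by linarith)
      linarith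
  have hmin : Tendsto (fun n : ℕ =>
      min ((5/2) * Real.log ((n:ℝ) * p n))
        ((5*δ/4) * Real.log n - (5/2) * Real.log 4)) atTop atTop := by
    rw [tendsto_atTop]
    intro b
    filter_upwards [hA1.eventually_ge_atTop b, hA2.eventually_ge_atTop b] with n h1 h2
    exact le_min h1 h2
  have hHtend : Tendsto (fun n : ℕ =>
      5 * Real.log ((n:ℝ) * p n) - 5 * (1 + δ) * ((n:ℝ) * p n ^ 2)) atTop atTop :=
    tendsto_atTop_mono' _ hHbound hmin
  have hGtend : Tendsto (fun n : ℕ => (1/122880 : ℝ) *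
      Real.exp (5 * Real.log ((n:ℝ) * p n) - 5 * (1 + δ) * ((n:ℝ) * p n ^ 2)))
      atTop atTop :=
    (Real.tendsto_exp_atTop.comp hHtend).const_mul_atTop (by norm_num)
  -- G ≤ F eventually
  apply tendsto_atTop_mono' atTop ?_ hGtend
  have hhalf : ∀ᶠ n : ℕ in atTop, p n ≤ 1/2 :=
    (hp0.eventually_lt_const (by norm_num : (0:ℝ) < 1/2)).mono fun n h => h.le
  have hsmall : ∀ᶠ n : ℕ in atTop, 5 * p n ^ 2 * (1 + δ) ≤ δ := by
    have h2 : Tendsto (fun n => 5 * p n ^ 2 * (1 + δ)) atTop (nhds 0) := by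
      have := ((hp0.mul hp0).const_mul 5).mul_const (1 + δ)
      simpa [pow_two, mul_assoc] using this
    exact (h2.eventually_lt_const hδ).mono fun n h => h.le
  filter_upwards [eventually_ge_atTop 8, hhalf, hsmall, hnp.eventually_ge_atTop 1]
    with n h8 hhalf' hsmall' hu1
  have hq0 : 0 < p n := (hp n).1
  have hq1 : p n < 1 := (hp n).2
  have hn0 : (0:ℝ) < (n:ℝ) := by
    have : (8:ℝ) ≤ (n:ℝ) := by exact_mod_cast h8
    linarith
  have hu0 : (0:ℝ) < (n:ℝ) * p n := by positivity
  have hE1 : Real.exp (-((1 + δ) * (5 * p n ^ 2))) ≤ 1 := Real.exp_le_one_iff.2 (by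
    rw [neg_nonpos]
    positivity)
  have hEq : Real.exp (-((1 + δ) * (5 * p n ^ 2))) ≤ qreal (p n) := by
    refine le_trans (exp_le_one_sub (by positivity) hδ (by linarith)) ?_
    exact qreal_ge hq0.le (by linarith)
  have hqreal0 : 0 ≤ qreal (p n) := le_trans (Real.exp_pos _).le hEq
  have hpow : Real.exp (-((1 + δ) * (5 * p n ^ 2))) ^ n ≤ qreal (p n) ^ (n - 5) := by
    calc Real.exp (-((1 + δ) * (5 * p n ^ 2))) ^ n
        ≤ Real.exp (-((1 + δ) * (5 * p n ^ 2))) ^ (n - 5) :=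
          pow_le_pow_of_le_one (Real.exp_pos _).le hE1 (Nat.sub_le n 5)
      _ ≤ qreal (p n) ^ (n - 5) := pow_le_pow_left₀ (Real.exp_pos _).le hEq _
  have hEn : Real.exp (-((1 + δ) * (5 * p n ^ 2))) ^ n =
      Real.exp ((n:ℝ) * -((1 + δ) * (5 * p n ^ 2))) := by
    rw [Real.exp_nat_mul]
  have hGn : (1/122880 : ℝ) *
      Real.exp (5 * Real.log ((n:ℝ) * p n) - 5 * (1 + δ) * ((n:ℝ) * p n ^ 2)) =
      ((((n:ℝ))/2)^5/120) * (p n ^ 5 * ((1/2)^5 *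
        Real.exp ((n:ℝ) * -((1 + δ) * (5 * p n ^ 2))))) := by
    rw [Real.exp_sub]
    rw [show (5:ℝ) * Real.log ((n:ℝ) * p n) = Real.log (((n:ℝ) * p n)^(5:ℕ)) by
      rw [Real.log_pow]; norm_num]
    rw [Real.exp_log (by positivity)]
    rw [show ((n:ℝ) * -((1 + δ) * (5 * p n ^ 2))) =
      -(5 * (1 + δ) * ((n:ℝ) * p n ^ 2)) by ring]
    rw [Real.exp_neg]
    have hepos : (0:ℝ) < Real.exp (5 * (1 + δ) * ((n:ℝ) * p n ^ 2)) := Real.exp_pos _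
    field_simp
    ring
  rw [hGn]
  have hnneg : 0 ≤ p n ^ 5 * ((1 - p n)^5 * qreal (p n) ^ (n - 5)) :=
    mul_nonneg (by positivity)
      (mul_nonneg (pow_nonneg (by linarith) 5) (pow_nonneg hqreal0 _))
  have b1 : (1/2:ℝ)^5 * Real.exp ((n:ℝ) * -((1 + δ) * (5 * p n ^ 2))) ≤
      (1 - p n)^5 * qreal (p n) ^ (n - 5) := by
    rw [← hEn]
    exact mul_le_mul (pow_le_pow_left₀ (by norm_num) (by linarith) 5) hpow
      (pow_nonneg (Real.exp_pos _).le n) (pow_nonneg (by linarith) 5)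
  have b2 : p n ^ 5 * ((1/2:ℝ)^5 * Real.exp ((n:ℝ) * -((1 + δ) * (5 * p n ^ 2)))) ≤
      p n ^ 5 * ((1 - p n)^5 * qreal (p n) ^ (n - 5)) :=
    mul_le_mul_of_nonneg_left b1 (by positivity)
  have b3 : ((((n:ℝ))/2)^5/120) * (p n ^ 5 * ((1/2:ℝ)^5 *
        Real.exp ((n:ℝ) * -((1 + δ) * (5 * p n ^ 2))))) ≤
      ((((n:ℝ))/2)^5/120) * (p n ^ 5 * ((1 - p n)^5 * qreal (p n) ^ (n - 5))) :=
    mul_le_mul_of_nonneg_left b2 (by positivity)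
  have b4 : ((((n:ℝ))/2)^5/120) * (p n ^ 5 * ((1 - p n)^5 * qreal (p n) ^ (n - 5))) ≤
      (n.choose 5 : ℝ) * (p n ^ 5 * ((1 - p n)^5 * qreal (p n) ^ (n - 5))) :=
    mul_le_mul_of_nonneg_right (choose5_ge h8) hnneg
  calc ((((n:ℝ))/2)^5/120) * (p n ^ 5 * ((1/2:ℝ)^5 *
        Real.exp ((n:ℝ) * -((1 + δ) * (5 * p n ^ 2))))) ≤
      (n.choose 5 : ℝ) * (p n ^ 5 * ((1 - p n)^5 * qreal (p n) ^ (n - 5))) :=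
        le_trans b3 b4
    _ = (n.choose 5 : ℝ) * (p n ^ 5 * (1 - p n)^5 * qreal (p n) ^ (n - 5)) := by ring



end MP

/-- At densities below $(\sqrt{1/2}-\epsilon)\sqrt{\log n / n}$ (with $np \to \infty$),
the expected number of induced 5-cycles S with no outside vertex adjacent to two
non-adjacent vertices of S tends to infinity. -/
theorem expected_morse_pentagons_tendsto_atTop (ε : ℝ) (hε : 0 < ε) (p : ℕ → ℝ)
    (hp : ∀ n, 0 < p n ∧ p n < 1)
    (hnp : Tendsto (fun n : ℕ => (n : ℝ) * p n) atTop atTop)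
    (hlt : ∀ᶠ n : ℕ in atTop,
      p n < (Real.sqrt (1 / 2) - ε) * Real.sqrt (Real.log n / n)) :
    Tendsto
      (fun n : ℕ =>
        ∫ ω, (Nat.card {S : Finset (Fin n) //
            IsInducedCycle (graphOf ω) 5 S ∧ NoOutsideCommonNbr (graphOf ω) S} : ℝ)
          ∂(edgeMeasure n (p n)))
      atTop atTop := by
  apply tendsto_atTop_mono
    (fun n => MP.integral_ge (p n) (hp n).1 (hp n).2)
    (MP.analysis ε hε p hp hnp hlt)
end
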